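/- Conversely, if a Clifford unitary U defines code states |x̄⟩ = U(|x⟩ ⊗ |0⟩^{⊗n-k}) satisfying ⟨x̄| σ_μ |ȳ⟩ = C_μ δ_{xy} for all x,y and all μ with 1 ≤ w(μ) ≤ d, then tr[σ_μ U (σ_{ν_A} ⊗ σ_{ν_B}) U†] = 0 for every ν_A ∈ {0,1,2,3}^k \ {0}, ν_B ∈ {0,3}^{n-k}, and every μ with 1 ≤ w(μ) ≤ d. -/

import Mathlib

open Matrix BigOperators Finset

/-- The four `2×2` Pauli matrices: `I, X, Y, Z`. -/
noncomputable def pauli : Fin 4 → Matrix (Fin 2) (Fin 2) ℂ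
  | 0 => !![1, 0; 0, 1]
  | 1 => !![0, 1; 1, 0]
  | 2 => !![0, -Complex.I; Complex.I, 0]
  | 3 => !![1, 0; 0, -1]

/-- The Pauli operator `σ_ν = σ_{ν_1} ⊗ ⋯ ⊗ σ_{ν_n}` on the qubits indexed by `ι`. -/
noncomputable def pauliString {ι : Type*} [Fintype ι] (ν : ι → Fin 4) :
    Matrix (ι → Fin 2) (ι → Fin 2) ℂ :=
  fun x y => ∏ i, pauli (ν i) (x i) (y i)

/-- The weight of a Pauli string: the number of nonidentity tensor factors. -/
def pWeight {ι : Type*} [Fintype ι] [DecidableEq ι] (ν : ι → Fin 4) : ℕ :=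
  (Finset.univ.filter fun i => ν i ≠ 0).card

variable {k m : ℕ}

/-- The vector `|x⟩_A ⊗ |0⟩_B` on the `k + m` qubits `Fin k ⊕ Fin m`. -/
noncomputable def ketX0 (x : Fin k → Fin 2) : (Fin k ⊕ Fin m → Fin 2) → ℂ :=
  fun z => if (∀ i, z (Sum.inl i) = x i) ∧ (∀ j : Fin m, z (Sum.inr j) = 0) then 1 else 0

/-- The code state `|x̄⟩ = U (|x⟩ ⊗ |0⟩^{⊗ m})`. -/
noncomputable def codeState (U : Matrix (Fin k ⊕ Fin m → Fin 2) (Fin k ⊕ Fin m → Fin 2) ℂ)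
    (x : Fin k → Fin 2) : (Fin k ⊕ Fin m → Fin 2) → ℂ :=
  U.mulVec (ketX0 x)

/-- The operator `I_A ⊗ |0⟩⟨0|_B^{⊗ m}`. -/
noncomputable def idProjZero :
    Matrix (Fin k ⊕ Fin m → Fin 2) (Fin k ⊕ Fin m → Fin 2) ℂ :=
  fun z w => if (∀ i, z (Sum.inl i) = w (Sum.inl i)) ∧ (∀ j : Fin m, z (Sum.inr j) = 0) ∧
      (∀ j : Fin m, w (Sum.inr j) = 0) then 1 else 0

/-! ### Auxiliary lemmas -/


lemma pauli_orth (a b : Fin 4) :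
    ∑ s : Fin 2, ∑ t : Fin 2, pauli a s t * pauli b t s = if a = b then 2 else 0 := by
  fin_cases a <;> fin_cases b <;>
    norm_num [pauli, Fin.sum_univ_two, Complex.I_mul_I] <;> ring_nf <;>
    simp [Complex.I_sq]

lemma pauli_tr (a : Fin 4) :
    ∑ s : Fin 2, pauli a s s = if a = 0 then 2 else 0 := by
  fin_cases a <;> norm_num [pauli, Fin.sum_univ_two] <;> rw [if_neg (by decide)]

lemma pauli_zero_zero (a : Fin 4) (h : a = 0 ∨ a = 3) : pauli a 0 0 = 1 := by
  rcases h with h | h <;> subst h <;> simp [pauli]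

lemma sum_prod_eq {ι : Type*} [Fintype ι] [DecidableEq ι] (G : ι → Fin 2 → ℂ) :
    ∑ x : ι → Fin 2, ∏ i, G i (x i) = ∏ i, ∑ s, G i s := by
  rw [Finset.prod_univ_sum, Fintype.piFinset_univ]

lemma trace_pauliString_mul {ι : Type*} [Fintype ι] [DecidableEq ι] (ν₁ ν₂ : ι → Fin 4) :
    (pauliString ν₁ * pauliString ν₂).trace = ∏ i, (if ν₁ i = ν₂ i then (2:ℂ) else 0) := by
  unfold Matrix.trace
  simp only [Matrix.diag, Matrix.mul_apply, pauliString, ← Finset.prod_mul_distrib]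
  calc ∑ x : ι → Fin 2, ∑ y : ι → Fin 2, ∏ i, pauli (ν₁ i) (x i) (y i) * pauli (ν₂ i) (y i) (x i)
      = ∑ x : ι → Fin 2, ∏ i, ∑ t, pauli (ν₁ i) (x i) t * pauli (ν₂ i) t (x i) := by
        refine Finset.sum_congr rfl fun x _ => ?_
        exact sum_prod_eq fun i t => pauli (ν₁ i) (x i) t * pauli (ν₂ i) t (x i)
    _ = ∏ i, ∑ s, ∑ t, pauli (ν₁ i) s t * pauli (ν₂ i) t s :=
        sum_prod_eq fun i s => ∑ t, pauli (ν₁ i) s t * pauli (ν₂ i) t s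
    _ = ∏ i, (if ν₁ i = ν₂ i then (2:ℂ) else 0) :=
        Finset.prod_congr rfl fun i _ => pauli_orth _ _

lemma trace_pauliString {ι : Type*} [Fintype ι] [DecidableEq ι] (ν : ι → Fin 4) :
    (pauliString ν).trace = ∏ i, (if ν i = 0 then (2:ℂ) else 0) := by
  unfold Matrix.trace pauliString
  simp only [Matrix.diag]
  rw [sum_prod_eq fun i s => pauli (ν i) s s]
  exact Finset.prod_congr rfl fun i _ => pauli_tr _

lemma mulVec_inner {n : Type*} [Fintype n] [DecidableEq n] (U M : Matrix n n ℂ) (v w : n → ℂ) :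
    star (U.mulVec v) ⬝ᵥ M.mulVec (U.mulVec w) = star v ⬝ᵥ ((star U) * M * U).mulVec w := by
  rw [Matrix.mulVec_mulVec, Matrix.star_mulVec, Matrix.dotProduct_mulVec,
    Matrix.dotProduct_mulVec, Matrix.star_eq_conjTranspose, Matrix.vecMul_vecMul,
    Matrix.mul_assoc]

lemma ketX0_eq (x : Fin k → Fin 2) :
    (ketX0 x : (Fin k ⊕ Fin m → Fin 2) → ℂ) =
      fun z => if z = Sum.elim x (fun _ => 0) then 1 else 0 := by
  funext z
  unfold ketX0
  congr 1
  simp only [eq_iff_iff]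
  constructor
  · rintro ⟨h1, h2⟩
    funext i
    cases i with
    | inl i => simp [h1 i]
    | inr j => simp [h2 j]
  · rintro rfl
    exact ⟨fun _ => rfl, fun _ => rfl⟩

lemma inner_point (M : Matrix (Fin k ⊕ Fin m → Fin 2) (Fin k ⊕ Fin m → Fin 2) ℂ)
    (x y : Fin k → Fin 2) :
    star (ketX0 x) ⬝ᵥ M.mulVec (ketX0 y) =
      M (Sum.elim x fun _ => 0) (Sum.elim y fun _ => 0) := by
  rw [ketX0_eq, ketX0_eq]
  simp [dotProduct, Matrix.mulVec, apply_ite, mul_ite, ite_mul,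
    Finset.sum_ite_eq', Finset.sum_ite_eq]

lemma pauliString_elim (νA : Fin k → Fin 4) (νB : Fin m → Fin 4)
    (hB : ∀ j, νB j = 0 ∨ νB j = 3) (x y : Fin k → Fin 2) :
    pauliString (Sum.elim νA νB) (Sum.elim x fun _ => 0) (Sum.elim y fun _ => 0) =
      pauliString νA x y := by
  unfold pauliString
  rw [Fintype.prod_sum_type]
  simp only [Sum.elim_inl, Sum.elim_inr]
  rw [Finset.prod_congr rfl fun j _ => pauli_zero_zero (νB j) (hB j), Finset.prod_const_one,
    mul_one]


/-- Conversely, if the code states `|x̄⟩ = U(|x⟩ ⊗ |0⟩^{⊗m})` of a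
Clifford unitary `U` satisfy `⟨x̄|σ_μ|ȳ⟩ = C_μ δ_{xy}` for all `x, y` and all `μ`
with `1 ≤ w(μ) ≤ d`, then `tr[σ_μ U (σ_{ν_A} ⊗ σ_{ν_B}) U†] = 0` for every
nonzero `ν_A ∈ {0,1,2,3}^k`, every `ν_B ∈ {0,3}^m` and every such `μ`. -/
theorem distance_condition_necessary (k m d : ℕ)
    (U : Matrix (Fin k ⊕ Fin m → Fin 2) (Fin k ⊕ Fin m → Fin 2) ℂ)
    (hU : U ∈ Matrix.unitaryGroup (Fin k ⊕ Fin m → Fin 2) ℂ)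
    (hClif : ∀ ν : Fin k ⊕ Fin m → Fin 4, ∃ (μ : Fin k ⊕ Fin m → Fin 4) (ε : ℂ),
      (ε = 1 ∨ ε = -1) ∧ U * pauliString ν * star U = ε • pauliString μ)
    (C : (Fin k ⊕ Fin m → Fin 4) → ℝ)
    (hcode : ∀ μ : Fin k ⊕ Fin m → Fin 4, 1 ≤ pWeight μ → pWeight μ ≤ d →
      ∀ x y : Fin k → Fin 2,
        star (codeState U x) ⬝ᵥ (pauliString μ).mulVec (codeState U y) =
          if x = y then (C μ : ℂ) else 0) :
    ∀ (νA : Fin k → Fin 4) (νB : Fin m → Fin 4), νA ≠ 0 →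
      (∀ j, νB j = 0 ∨ νB j = 3) →
      ∀ μ : Fin k ⊕ Fin m → Fin 4, 1 ≤ pWeight μ → pWeight μ ≤ d →
        (pauliString μ * (U * pauliString (Sum.elim νA νB) * star U)).trace = 0 := by
  intro νA νB hA hB μ hw1 hw2
  obtain ⟨μ', ε, hε, hCl⟩ := hClif (Sum.elim νA νB)
  rw [hCl, Matrix.mul_smul, Matrix.trace_smul, trace_pauliString_mul]
  by_cases hμ : μ = μ'
  · exfalso
    subst hμ
    have hε2 : ε * ε = 1 := by rcases hε with h | h <;> rw [h] <;> ring
    have hεne : ε ≠ 0 := by rcases hε with h | h <;> rw [h] <;> norm_num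
    have hU1 : star U * U = 1 := hU.1
    have key : star U * pauliString μ * U = ε • pauliString (Sum.elim νA νB) := by
      have h := congrArg (fun M => star U * M * U) hCl
      have hL : star U * (U * pauliString (Sum.elim νA νB) * star U) * U =
          pauliString (Sum.elim νA νB) := by
        simp only [Matrix.mul_assoc]
        rw [hU1, Matrix.mul_one, ← Matrix.mul_assoc, hU1, Matrix.one_mul]
      have hR : star U * (ε • pauliString μ) * U = ε • (star U * pauliString μ * U) := by
        rw [Matrix.mul_smul, Matrix.smul_mul]
      rw [hL, hR] at h
      rw [h, smul_smul, hε2, one_smul]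
    have hxy : ∀ x y : Fin k → Fin 2,
        ε * pauliString νA x y = if x = y then (C μ : ℂ) else 0 := by
      intro x y
      have h := hcode μ hw1 hw2 x y
      unfold codeState at h
      rw [mulVec_inner, inner_point, key, Matrix.smul_apply,
        pauliString_elim νA νB hB, smul_eq_mul] at h
      exact h
    have t0 : (pauliString νA).trace = 0 := by
      rw [trace_pauliString]
      obtain ⟨i, hi⟩ := Function.ne_iff.mp hA
      exact Finset.prod_eq_zero (Finset.mem_univ i) (if_neg (by simpa using hi))
    have hsum : (0 : ℂ) = (2 : ℂ) ^ k * (C μ : ℂ) := by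
      have h1 : ε * (pauliString νA).trace =
          ∑ x : Fin k → Fin 2, ((if x = x then (C μ : ℂ) else 0)) := by
        unfold Matrix.trace
        rw [Finset.mul_sum]
        exact Finset.sum_congr rfl fun x _ => hxy x x
      rw [t0, mul_zero] at h1
      have h2 : ∑ x : Fin k → Fin 2, ((if x = x then (C μ : ℂ) else 0)) =
          (2 : ℂ) ^ k * (C μ : ℂ) := by
        simp [Finset.sum_const, Fintype.card_fun, mul_comm]
      rw [h1, h2]
    have hC0 : (C μ : ℂ) = 0 := by
      have h2 : (2 : ℂ) ^ k ≠ 0 := pow_ne_zero _ two_ne_zero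
      field_simp at hsum
      exact (mul_eq_zero.mp hsum.symm).resolve_left h2
    have hzero : pauliString νA = 0 := by
      ext x y
      have h := hxy x y
      rw [hC0] at h
      simp only [ite_self] at h
      have := mul_eq_zero.mp h
      simpa [hεne] using this
    have h2 := trace_pauliString_mul νA νA
    rw [hzero, Matrix.zero_mul, Matrix.trace_zero] at h2
    simp only [if_pos rfl, Finset.prod_const] at h2
    exact (pow_ne_zero (Finset.univ.card) (two_ne_zero' ℂ)) h2.symm
  · obtain ⟨i, hi⟩ := Function.ne_iff.mp hμ
    have hz : (∏ i, if μ i = μ' i then (2:ℂ) else 0) = 0 :=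
      Finset.prod_eq_zero (Finset.mem_univ i) (if_neg hi)
    rw [hz, smul_zero]
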